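/- arXiv:2305.00276 — 2 statements merged into one kernel-verified Lean document; each statement's English description precedes it below -/
import Mathlib

section
/- Suppose c₂=2 and p^{(1,p−1)}_{(2,2),(p−1,1)}≠0 for some (1,p−1)∈∂̃(Γ) with (2,2)∈∂̃(Γ). Then p^{(1,t−1)}_{(2,2),(r−1,1)}=0 for all t with t≠p and all r (whenever (1,t−1),(r−1,1)∈∂̃(Γ)). -/
namespace Paper

/-- A digraph: a set of vertices together with a set of arcs (ordered pairs of
distinct vertices). -/
structure Digraph (V : Type*) where
  Adj : V → V → Prop
  loopless : ∀ v : V, ¬ Adj v v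

variable {V V' : Type*}

namespace Digraph

/-- There is a directed walk of length `n` from `x` to `y`. -/
def HasPath (G : Digraph V) (x y : V) (n : ℕ) : Prop :=
  ∃ f : ℕ → V, f 0 = x ∧ f n = y ∧ ∀ k < n, G.Adj (f k) (f (k + 1))

/-- The distance `∂(x,y)`: the length of a shortest directed path from `x` to `y`. -/
noncomputable def dist (G : Digraph V) (x y : V) : ℕ :=
  sInf {n | G.HasPath x y n}

/-- The two-way distance `∂̃(x,y) = (∂(x,y), ∂(y,x))`. -/
noncomputable def tdist (G : Digraph V) (x y : V) : ℕ × ℕ :=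
  (G.dist x y, G.dist y x)

/-- The two-way distance set `∂̃(Γ)`. -/
def tdSet (G : Digraph V) : Set (ℕ × ℕ) :=
  {p | ∃ x y : V, G.tdist x y = p}

def StronglyConnected (G : Digraph V) : Prop :=
  ∀ x y : V, ∃ n, G.HasPath x y n

/-- `P_{ĩ,j̃}(x,y)`: the set of `z` with `∂̃(x,z) = ĩ` and `∂̃(z,y) = j̃`. -/
def P (G : Digraph V) (i j : ℕ × ℕ) (x y : V) : Set V :=
  {z | G.tdist x z = i ∧ G.tdist z y = j}

open Classical in
/-- The intersection number `p^{h̃}_{ĩ,j̃}`, defined using an arbitrarily chosen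
pair at two-way distance `h̃` (and `0` if there is no such pair). -/
noncomputable def p (G : Digraph V) (h i j : ℕ × ℕ) : ℕ :=
  if hh : ∃ xy : V × V, G.tdist xy.1 xy.2 = h then
    Nat.card (G.P i j hh.choose.1 hh.choose.2)
  else 0

/-- A weakly distance-regular digraph: strongly connected, and
`|P_{ĩ,j̃}(x,y)|` depends only on `∂̃(x,y)`, `ĩ` and `j̃`. -/
def IsWDR (G : Digraph V) : Prop :=
  G.StronglyConnected ∧
    ∀ (i j : ℕ × ℕ) (x y : V), Nat.card (G.P i j x y) = G.p (G.tdist x y) i j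

/-- Commutativity: `p^{h̃}_{ĩ,j̃} = p^{h̃}_{j̃,ĩ}` for all `h̃,ĩ,j̃ ∈ ∂̃(Γ)`. -/
def IsCommutative (G : Digraph V) : Prop :=
  ∀ h i j : ℕ × ℕ, h ∈ G.tdSet → i ∈ G.tdSet → j ∈ G.tdSet → G.p h i j = G.p h j i

/-- `Γ` is an undirected graph, i.e. its arc set is symmetric. -/
def IsUndirected (G : Digraph V) : Prop :=
  ∀ x y : V, G.Adj x y → G.Adj y x

def IsSemicomplete (G : Digraph V) : Prop :=
  ∀ x y : V, x ≠ y → (G.Adj x y ∨ G.Adj y x)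

/-- `Γ` is a complete (undirected) graph. -/
def IsCompleteDigraph (G : Digraph V) : Prop :=
  ∀ x y : V, x ≠ y → (G.Adj x y ∧ G.Adj y x)

/-- The underlying graph of a digraph. -/
def underlying (G : Digraph V) : SimpleGraph V where
  Adj x y := G.Adj x y ∨ G.Adj y x
  symm := ⟨fun _ _ h => h.symm⟩
  loopless := ⟨fun x h => h.elim (G.loopless x) (G.loopless x)⟩

/-- The diameter: the maximum value of the distance function. -/
noncomputable def diameter (G : Digraph V) : ℕ :=
  sSup {n | ∃ x y : V, G.dist x y = n}

/-- The girth: the length of a shortest circuit. -/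
noncomputable def girth (G : Digraph V) : ℕ :=
  sInf {n | 0 < n ∧ ∃ x : V, G.HasPath x x n}

/-- Number of out-neighbours `d⁺(x)`. -/
noncomputable def outDeg (G : Digraph V) (x : V) : ℕ := Nat.card {y | G.Adj x y}

/-- Number of in-neighbours `d⁻(x)`. -/
noncomputable def inDeg (G : Digraph V) (x : V) : ℕ := Nat.card {y | G.Adj y x}

def IsIsomorphicTo (G : Digraph V) (G' : Digraph V') : Prop :=
  ∃ e : V ≃ V', ∀ x y : V, G.Adj x y ↔ G'.Adj (e x) (e y)

/-- The Cartesian product of two digraphs. -/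
def box (G : Digraph V) (G' : Digraph V') : Digraph (V × V') where
  Adj x y := (x.1 = y.1 ∧ G'.Adj x.2 y.2) ∨ (G.Adj x.1 y.1 ∧ x.2 = y.2)
  loopless := fun v h => h.elim (fun h' => G'.loopless v.2 h'.2) (fun h' => G.loopless v.1 h'.1)

/-- Two digraphs have the same intersection numbers. -/
def SameIntersectionNumbers (G : Digraph V) (G' : Digraph V') : Prop :=
  G.tdSet = G'.tdSet ∧
    ∀ h i j : ℕ × ℕ, h ∈ G.tdSet → i ∈ G.tdSet → j ∈ G.tdSet → G.p h i j = G'.p h i j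

/-- Induced subdigraph on a set of vertices. -/
def induce (G : Digraph V) (s : Set V) : Digraph s where
  Adj x y := G.Adj x.1 y.1
  loopless := fun v h => G.loopless v.1 h

end Digraph

/-- The Cartesian product of a family of digraphs. -/
def piBox {ι : Type*} {W : ι → Type*} (G : ∀ i, Digraph (W i)) : Digraph (∀ i, W i) where
  Adj x y := ∃ i, (G i).Adj (x i) (y i) ∧ ∀ j, j ≠ i → x j = y j
  loopless := by
    rintro v ⟨i, hi, -⟩
    exact (G i).loopless _ hi

/-- The Cayley digraph `Cay(A,S)` of an additive group (for `S ⊆ A ∖ {0}`). -/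
def Cay (A : Type*) [AddGroup A] (S : Set A) : Digraph A where
  Adj x y := x ≠ y ∧ y - x ∈ S
  loopless := fun _ h => h.1 rfl

/-- The Cayley graph of an additive group with respect to a symmetric connection set. -/
def cayleyGraph (A : Type*) [AddGroup A] (S : Set A) : SimpleGraph A where
  Adj x y := x ≠ y ∧ (y - x ∈ S ∨ x - y ∈ S)
  symm := ⟨fun _ _ h => ⟨h.1.symm, h.2.symm⟩⟩
  loopless := ⟨fun _ h => h.1 rfl⟩

/-- The Hamming graph `H(ι, S)`: vertices are tuples, adjacent iff they differ in
exactly one coordinate. -/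
def hammingGraph (ι : Type*) (S : Type*) : SimpleGraph (ι → S) where
  Adj x y := ∃ i, x i ≠ y i ∧ ∀ j, j ≠ i → x j = y j
  symm := by
    refine ⟨?_⟩
    rintro x y ⟨i, h1, h2⟩
    exact ⟨i, h1.symm, fun j hj => (h2 j hj).symm⟩
  loopless := by
    refine ⟨?_⟩
    rintro x ⟨i, h1, -⟩
    exact h1 rfl

/-- The folded `n`-cube: vertices are `(n-1)`-tuples over `ℤ₂`, adjacent iff they
differ in exactly one coordinate or in all `n-1` coordinates. -/
def foldedCube (n : ℕ) : SimpleGraph (Fin (n - 1) → ZMod 2) where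
  Adj x y := (∃ i, x i ≠ y i ∧ ∀ j, j ≠ i → x j = y j) ∨ (x ≠ y ∧ ∀ j, x j ≠ y j)
  symm := by
    refine ⟨?_⟩
    rintro x y (⟨i, h1, h2⟩ | ⟨h1, h2⟩)
    · exact Or.inl ⟨i, h1.symm, fun j hj => (h2 j hj).symm⟩
    · exact Or.inr ⟨h1.symm, fun j => (h2 j).symm⟩
  loopless := by
    refine ⟨?_⟩
    rintro x (⟨i, h1, -⟩ | ⟨h1, -⟩)
    · exact h1 rfl
    · exact h1 rfl

/-- The Cartesian product of a family of simple graphs. -/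
def piBoxGraph {ι : Type*} {W : ι → Type*} (G : ∀ i, SimpleGraph (W i)) :
    SimpleGraph (∀ i, W i) where
  Adj x y := ∃ i, (G i).Adj (x i) (y i) ∧ ∀ j, j ≠ i → x j = y j
  symm := by
    refine ⟨?_⟩
    rintro x y ⟨i, h1, h2⟩
    exact ⟨i, (G i).adj_symm h1, fun j hj => (h2 j hj).symm⟩
  loopless := by
    refine ⟨?_⟩
    rintro x ⟨i, h1, -⟩
    exact (G i).irrefl h1

/-- The Shrikhande graph `Cay(ℤ₄ × ℤ₄, {±(1,0), ±(0,1), ±(1,1)})`. -/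
def shrikhande : SimpleGraph (ZMod 4 × ZMod 4) :=
  cayleyGraph (ZMod 4 × ZMod 4) {(1, 0), (-1, 0), (0, 1), (0, -1), (1, 1), (-1, -1)}

/-- The Doob graph `G(d₁, d₂)`: the Cartesian product of `d₁` copies of the
Shrikhande graph with the Hamming graph `H(d₂, 4)`. -/
def doobGraph (d₁ d₂ : ℕ) :
    SimpleGraph ((Fin d₁ → ZMod 4 × ZMod 4) × (Fin d₂ → ZMod 4)) :=
  (piBoxGraph fun _ : Fin d₁ => shrikhande).boxProd (hammingGraph (Fin d₂) (ZMod 4))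

/-- `c_i(x,y)`: the number of neighbours of `y` at distance `i - 1` from `x`. -/
noncomputable def cNum (G : SimpleGraph V) (i : ℕ) (x y : V) : ℕ :=
  Nat.card {z : V | G.Adj y z ∧ G.dist x z = i - 1}

/-- `a_i(x,y)`: the number of neighbours of `y` at distance `i` from `x`. -/
noncomputable def aNum (G : SimpleGraph V) (i : ℕ) (x y : V) : ℕ :=
  Nat.card {z : V | G.Adj y z ∧ G.dist x z = i}

/-- `b_i(x,y)`: the number of neighbours of `y` at distance `i + 1` from `x`. -/
noncomputable def bNum (G : SimpleGraph V) (i : ℕ) (x y : V) : ℕ :=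
  Nat.card {z : V | G.Adj y z ∧ G.dist x z = i + 1}

/-- A distance-regular graph. -/
def IsDRG (G : SimpleGraph V) : Prop :=
  G.Connected ∧
    ∀ (i : ℕ) (x y x' y' : V), G.dist x y = i → G.dist x' y' = i →
      cNum G i x y = cNum G i x' y' ∧ bNum G i x y = bNum G i x' y'

/-- A distance-transitive graph. -/
def IsDistanceTransitive (G : SimpleGraph V) : Prop :=
  G.Connected ∧
    ∀ x y x' y' : V, G.dist x y = G.dist x' y' → ∃ σ : G ≃g G, σ x = x' ∧ σ y = y'

/-- The vertex set of `Γ_i(α)`: all tuples obtained from `α` by inserting an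
arbitrary element of `S` in the `i`-th coordinate. -/
def lineSet {n : ℕ} {S : Type*} (i : Fin (n + 1)) (α : Fin n → S) : Set (Fin (n + 1) → S) :=
  Set.range fun b : S => i.insertNth b α

/-- The induced subdigraph `Γ_i(α)`. -/
def Digraph.line {n : ℕ} {S : Type*} (Γ : Digraph (Fin (n + 1) → S)) (i : Fin (n + 1))
    (α : Fin n → S) : Digraph (lineSet i α) :=
  Γ.induce (lineSet i α)

/-- Pad a tuple of length `m` with the entry `o` to a tuple of length `d`. -/
def pad {S : Type*} (o : S) (d m : ℕ) (α : Fin m → S) : Fin d → S :=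
  fun j => if h : j.1 < m then α ⟨j.1, h⟩ else o

/-- The digraph `Γ^{[m]}` on `S^m`: `(α,β)` is an arc iff the padded tuples form
an arc of `Γ`. -/
def Digraph.trunc {S : Type*} {d : ℕ} (Γ : Digraph (Fin d → S)) (o : S) (m : ℕ) :
    Digraph (Fin m → S) where
  Adj α β := Γ.Adj (pad o d m α) (pad o d m β)
  loopless := fun _ h => Γ.loopless _ h

/-- The digraph `Γ^i` on `S`: `(a,b)` is an arc iff the tuples with `a` resp. `b`
in the `i`-th coordinate and `o` elsewhere form an arc of `Γ`. -/
def Digraph.coordDigraph {S : Type*} {d : ℕ} (Γ : Digraph (Fin d → S)) (o : S) (i : Fin d) :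
    Digraph S where
  Adj a b := Γ.Adj (Function.update (fun _ => o) i a) (Function.update (fun _ => o) i b)
  loopless := fun _ h => Γ.loopless _ h

/-- The set `T = S^{m-1} × {(o,…,o)}` (as a subset of `S^{d-1}`, here `d = n+1`). -/
def Tset {n : ℕ} (S : Type*) (o : S) (m : ℕ) : Set (Fin n → S) :=
  {α | ∀ j : Fin n, m - 1 ≤ j.1 → α j = o}

end Paper

section Aux
open Paper

variable {V : Type*}

namespace Paper.Digraph

lemma hasPath_one_of_adj {G : Digraph V} {x y : V} (h : G.Adj x y) : G.HasPath x y 1 := by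
  refine ⟨fun k => if k = 0 then x else y, by simp, by simp, ?_⟩
  intro k hk
  interval_cases k
  simpa using h

lemma dist_le_one_of_adj {G : Digraph V} {x y : V} (h : G.Adj x y) : G.dist x y ≤ 1 :=
  Nat.sInf_le (hasPath_one_of_adj h)

lemma dist_self_le_zero (G : Digraph V) (x : V) : G.dist x x ≤ 0 :=
  Nat.sInf_le ⟨fun _ => x, rfl, rfl, fun k hk => absurd hk (Nat.not_lt_zero k)⟩

lemma hasPath_dist {G : Digraph V} (sc : G.StronglyConnected) (x y : V) :
    G.HasPath x y (G.dist x y) := Nat.sInf_mem (sc x y)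

lemma eq_of_dist_eq_zero {G : Digraph V} (sc : G.StronglyConnected) {x y : V}
    (h : G.dist x y = 0) : x = y := by
  have hp := hasPath_dist sc x y
  rw [h] at hp
  obtain ⟨f, h0, hn, -⟩ := hp
  rw [← h0, ← hn]

lemma adj_of_dist_eq_one {G : Digraph V} (sc : G.StronglyConnected) {x y : V}
    (h : G.dist x y = 1) : G.Adj x y := by
  have hp := hasPath_dist sc x y
  rw [h] at hp
  obtain ⟨f, h0, hn, ha⟩ := hp
  have := ha 0 (by norm_num)
  rwa [h0, hn] at this

lemma tdist_eq_iff {G : Digraph V} {x y : V} {a b : ℕ} :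
    G.tdist x y = (a, b) ↔ G.dist x y = a ∧ G.dist y x = b := Prod.ext_iff

lemma snd_ne_zero_of_mem_tdSet {G : Digraph V} (sc : G.StronglyConnected) {m : ℕ}
    (h : ((1 : ℕ), m) ∈ G.tdSet) : m ≠ 0 := by
  obtain ⟨x, y, hxy⟩ := h
  rintro rfl
  obtain ⟨h1, h2⟩ := tdist_eq_iff.mp hxy
  have hxy' := eq_of_dist_eq_zero sc h2
  rw [hxy'] at h1
  have := dist_self_le_zero G x
  omega

lemma exists_mem_P [Finite V] {G : Digraph V} (hwdr : G.IsWDR) {h i j : ℕ × ℕ}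
    (hne : G.p h i j ≠ 0) {x y : V} (hxy : G.tdist x y = h) :
    ∃ z, z ∈ G.P i j x y := by
  have hc := hwdr.2 i j x y
  rw [hxy] at hc
  have hcard : Nat.card (G.P i j x y) ≠ 0 := by rw [hc]; exact hne
  obtain ⟨⟨⟨z, hz⟩⟩, -⟩ := Nat.card_ne_zero.mp hcard
  exact ⟨z, hz⟩

lemma p_ne_zero_of_mem [Finite V] {G : Digraph V} (hwdr : G.IsWDR) {i j : ℕ × ℕ}
    {x y z : V} (hz : z ∈ G.P i j x y) : G.p (G.tdist x y) i j ≠ 0 := by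
  have hc := hwdr.2 i j x y
  rw [← hc]
  exact Nat.card_ne_zero.mpr ⟨⟨⟨z, hz⟩⟩, Subtype.finite⟩

end Paper.Digraph

end Aux

open Paper in
/-- **Lemma 3.2.** Suppose `c₂ = 2` and `p^{(1,p−1)}_{(2,2),(p−1,1)} ≠ 0`. Then
`p^{(1,t−1)}_{(2,2),(r−1,1)} = 0` for all `t ≠ p` and all `r`. -/
theorem lemma_pneqt {V : Type*} [Finite V] [Nonempty V] (Γ : Paper.Digraph V)
    (hwdr : Γ.IsWDR) (hcomm : Γ.IsCommutative)
    (hdrg : IsDRG Γ.underlying)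
    (hc2 : ∀ x y : V, Γ.underlying.dist x y = 2 → cNum Γ.underlying 2 x y = 2)
    (p : ℕ)
    (hp : ((1 : ℕ), p - 1) ∈ Γ.tdSet) (h22 : ((2 : ℕ), (2 : ℕ)) ∈ Γ.tdSet)
    (hne : Γ.p (1, p - 1) (2, 2) (p - 1, 1) ≠ 0) :
    ∀ t r : ℕ, t ≠ p → ((1 : ℕ), t - 1) ∈ Γ.tdSet → (r - 1, (1 : ℕ)) ∈ Γ.tdSet →
      Γ.p (1, t - 1) (2, 2) (r - 1, 1) = 0 := by
  intro t r htp h1t hr1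
  by_contra hne'
  have sc := hwdr.1
  have hpm : p - 1 ≠ 0 := Digraph.snd_ne_zero_of_mem_tdSet sc hp
  have htm : t - 1 ≠ 0 := Digraph.snd_ne_zero_of_mem_tdSet sc h1t
  -- witnesses for the `t` intersection number
  obtain ⟨x, y, hxy⟩ := h1t
  obtain ⟨z, hxz, hzy⟩ := Digraph.exists_mem_P hwdr hne' hxy
  obtain ⟨hdxy, hdyx⟩ := Digraph.tdist_eq_iff.mp hxy
  obtain ⟨hdxz, hdzx⟩ := Digraph.tdist_eq_iff.mp hxz
  obtain ⟨hdzy, hdyz⟩ := Digraph.tdist_eq_iff.mp hzy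
  -- witnesses for the `p` intersection number give `p^{(2,2)}_{(1,p-1),(1,p-1)} ≠ 0`
  obtain ⟨x0, y0, hxy0⟩ := hp
  obtain ⟨z0, hxz0, hzy0⟩ := Digraph.exists_mem_P hwdr hne hxy0
  obtain ⟨hdz0y0, hdy0z0⟩ := Digraph.tdist_eq_iff.mp hzy0
  have hy0 : Γ.tdist y0 z0 = (1, p - 1) := Digraph.tdist_eq_iff.mpr ⟨hdy0z0, hdz0y0⟩
  have hpp : Γ.p (2, 2) (1, p - 1) (1, p - 1) ≠ 0 := by
    have h := Digraph.p_ne_zero_of_mem hwdr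
      (show y0 ∈ Γ.P (1, p - 1) (1, p - 1) x0 z0 from ⟨hxy0, hy0⟩)
    rwa [hxz0] at h
  -- `p^{(2,2)}_{(1,t-1),(1,r-1)} ≠ 0`
  have hyz' : Γ.tdist y z = (1, r - 1) := Digraph.tdist_eq_iff.mpr ⟨hdyz, hdzy⟩
  have htt : Γ.p (2, 2) (1, t - 1) (1, r - 1) ≠ 0 := by
    have h := Digraph.p_ne_zero_of_mem hwdr
      (show y ∈ Γ.P (1, t - 1) (1, r - 1) x z from ⟨hxy, hyz'⟩)
    rwa [hxz] at h
  have hzx22 : Γ.tdist z x = ((2 : ℕ), (2 : ℕ)) := Digraph.tdist_eq_iff.mpr ⟨hdzx, hdxz⟩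
  -- the three extra common neighbours
  obtain ⟨u, hxu, huz⟩ := Digraph.exists_mem_P hwdr hpp hxz
  obtain ⟨v, hzv, hvx⟩ := Digraph.exists_mem_P hwdr hpp hzx22
  obtain ⟨v', hzv', hv'x⟩ := Digraph.exists_mem_P hwdr htt hzx22
  obtain ⟨hdxu, hdux⟩ := Digraph.tdist_eq_iff.mp hxu
  obtain ⟨hduz, hdzu⟩ := Digraph.tdist_eq_iff.mp huz
  obtain ⟨hdzv, hdvz⟩ := Digraph.tdist_eq_iff.mp hzv
  obtain ⟨hdvx, hdxv⟩ := Digraph.tdist_eq_iff.mp hvx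
  obtain ⟨hdzv', hdv'z⟩ := Digraph.tdist_eq_iff.mp hzv'
  obtain ⟨hdv'x, hdxv'⟩ := Digraph.tdist_eq_iff.mp hv'x
  -- digraph arcs
  have axy : Γ.Adj x y := Digraph.adj_of_dist_eq_one sc hdxy
  have ayz : Γ.Adj y z := Digraph.adj_of_dist_eq_one sc hdyz
  have axu : Γ.Adj x u := Digraph.adj_of_dist_eq_one sc hdxu
  have auz : Γ.Adj u z := Digraph.adj_of_dist_eq_one sc hduz
  have azv : Γ.Adj z v := Digraph.adj_of_dist_eq_one sc hdzv
  have avx : Γ.Adj v x := Digraph.adj_of_dist_eq_one sc hdvx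
  have azv' : Γ.Adj z v' := Digraph.adj_of_dist_eq_one sc hdzv'
  have av'x : Γ.Adj v' x := Digraph.adj_of_dist_eq_one sc hdv'x
  -- the underlying graph distance from x to z is 2
  have hxnez : x ≠ z := by
    rintro rfl
    have := Paper.Digraph.dist_self_le_zero Γ x
    omega
  have hnadj : ¬ Γ.underlying.Adj x z := by
    rintro (h | h : Γ.Adj x z ∨ Γ.Adj z x)
    · have := Paper.Digraph.dist_le_one_of_adj h; omega
    · have := Paper.Digraph.dist_le_one_of_adj h; omega
  have hle : Γ.underlying.dist x z ≤ 2 := by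
    simpa using SimpleGraph.dist_le
      (SimpleGraph.Walk.cons (show Γ.underlying.Adj x y from (Or.inl axy : Γ.Adj x y ∨ Γ.Adj y x))
        (SimpleGraph.Walk.cons (show Γ.underlying.Adj y z from (Or.inl ayz : Γ.Adj y z ∨ Γ.Adj z y))
          SimpleGraph.Walk.nil))
  have hne0 : Γ.underlying.dist x z ≠ 0 := fun h0 => hxnez (hdrg.1.dist_eq_zero_iff.mp h0)
  have hne1 : Γ.underlying.dist x z ≠ 1 := fun h1 => hnadj (SimpleGraph.dist_eq_one_iff_adj.mp h1)
  have h2d : Γ.underlying.dist x z = 2 := by omega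
  -- the set of common neighbours of x and z has exactly two elements
  have hCcard : ({c : V | Γ.underlying.Adj z c ∧ Γ.underlying.dist x c = 1} : Set V).ncard = 2 := by
    have h := hc2 x z h2d
    unfold cNum at h
    rw [Nat.card_coe_set_eq] at h
    simpa using h
  have mem_C : ∀ c : V, Γ.underlying.Adj z c → Γ.underlying.Adj x c →
      c ∈ ({c : V | Γ.underlying.Adj z c ∧ Γ.underlying.dist x c = 1} : Set V) := by
    intro c h1 h2
    exact ⟨h1, SimpleGraph.dist_eq_one_iff_adj.mpr h2⟩
  have hyC := mem_C y (Or.inr ayz : Γ.Adj z y ∨ Γ.Adj y z) (Or.inl axy : Γ.Adj x y ∨ Γ.Adj y x)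
  have huC := mem_C u (Or.inr auz : Γ.Adj z u ∨ Γ.Adj u z) (Or.inl axu : Γ.Adj x u ∨ Γ.Adj u x)
  have hvC := mem_C v (Or.inl azv : Γ.Adj z v ∨ Γ.Adj v z) (Or.inr avx : Γ.Adj x v ∨ Γ.Adj v x)
  have hv'C := mem_C v' (Or.inl azv' : Γ.Adj z v' ∨ Γ.Adj v' z) (Or.inr av'x : Γ.Adj x v' ∨ Γ.Adj v' x)
  have hyu : y ≠ u := by
    rintro rfl
    omega
  have hsub : ({y, u} : Set V) ⊆ {c : V | Γ.underlying.Adj z c ∧ Γ.underlying.dist x c = 1} := by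
    intro c hc
    rcases hc with rfl | rfl
    · exact hyC
    · exact huC
  have hCeq : ({y, u} : Set V) = {c : V | Γ.underlying.Adj z c ∧ Γ.underlying.dist x c = 1} := by
    exact Set.eq_of_subset_of_ncard_le hsub (by rw [Set.ncard_pair hyu, hCcard]) (Set.toFinite _)
  have hv : v = y ∨ v = u := by
    rw [← hCeq] at hvC
    simpa using hvC
  have hv' : v' = y ∨ v' = u := by
    rw [← hCeq] at hv'C
    simpa using hv'C
  -- derive p = 2 and t = 2, contradicting t ≠ p
  have hp2 : p - 1 = 1 := by
    rcases hv with rfl | rfl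
    · omega
    · omega
  have ht2 : t - 1 = 1 := by
    rcases hv' with rfl | rfl
    · omega
    · omega
  omega
end

section
/- Let 1≤i≤m, α∈T, and x∈V(Γ)∖V(Γᵢ(α)). Then x has at most one neighbour in V(Γᵢ(α)) in the underlying graph Σ. -/
open Paper in
/-- **Lemma 3.6.** A vertex outside `Γᵢ(α)` has at most one neighbour in
`Γᵢ(α)` (in the underlying graph). -/
theorem lemma_at_most_one_neighbour {S : Type*} [Finite S] {n : ℕ}
    (Γ : Paper.Digraph (Fin (n + 1) → S)) (q : ℕ) (hq : q = Nat.card S)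
    (hwdr : Γ.IsWDR) (hcomm : Γ.IsCommutative)
    (hdrg : IsDRG Γ.underlying)
    (ha1 : ∀ x y, Γ.underlying.dist x y = 1 → aNum Γ.underlying 1 x y = q - 2)
    (hc2 : ∀ x y, Γ.underlying.dist x y = 2 → cNum Γ.underlying 2 x y = 2)
    (o : S) (m : ℕ) (hm1 : 1 ≤ m) (hmd : m ≤ n + 1)
    (hham : (Γ.trunc o m).underlying = hammingGraph (Fin m) S)
    (i : Fin (n + 1)) (hi : i.1 < m)
    (α : Fin n → S) (hα : α ∈ Tset S o m)
    (x : Fin (n + 1) → S) (hx : x ∉ lineSet i α) :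
    Set.Subsingleton {y | y ∈ lineSet i α ∧ Γ.underlying.Adj x y} := by
    classical
    have hconn := hdrg.1
    set Sg := Γ.underlying with hSg
    set iN : S → (Fin (n + 1) → S) := fun b => i.insertNth b α with hiN
    -- padding fact
    have hmpos : 0 < m := hm1
    have hpad : ∀ b : S,
        pad o (n + 1) m (fun k : Fin m => iN b ⟨k.1, lt_of_lt_of_le k.2 hmd⟩) = iN b := by
      intro b
      funext j
      unfold pad
      split
      · rfl
      · rename_i h
        push_neg at h
        -- j.1 ≥ m, so j ≠ i and insertNth gives α value which is o
        have hji : j ≠ i := by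
          intro hji; rw [hji] at h; omega
        obtain ⟨k, hk⟩ := Fin.exists_succAbove_eq hji
        have hval : j.1 = k.1 ∨ j.1 = k.1 + 1 := by
          rw [← hk]
          rcases Fin.succAbove_lt_iff_castSucc_lt i k |>.symm with _
          by_cases hc : k.castSucc < i
          · left; rw [Fin.succAbove_of_castSucc_lt _ _ hc]; rfl
          · right; rw [Fin.succAbove_of_le_castSucc _ _ (le_of_not_gt hc)]; rfl
        have : iN b j = α k := by rw [← hk, hiN]; simp
        rw [this, hα k (by omega)]
    -- the line is a clique in the underlying graph
    have hclique : ∀ b b' : S, b ≠ b' → Sg.Adj (iN b) (iN b') := by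
      intro b b' hbb
      set β : S → (Fin m → S) := fun c => fun k : Fin m => iN c ⟨k.1, lt_of_lt_of_le k.2 hmd⟩
        with hβ
      have hadj : (hammingGraph (Fin m) S).Adj (β b) (β b') := by
        refine ⟨⟨i.1, hi⟩, ?_, ?_⟩
        · have h1 : (⟨i.1, lt_of_lt_of_le (⟨i.1, hi⟩ : Fin m).2 hmd⟩ : Fin (n + 1)) = i :=
            Fin.ext rfl
          simp only [hβ, hiN, h1, Fin.insertNth_apply_same]
          exact hbb
        · intro k hk
          have hki : (⟨k.1, lt_of_lt_of_le k.2 hmd⟩ : Fin (n + 1)) ≠ i := by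
            intro hcon
            apply hk
            exact Fin.ext (show k.1 = i.1 from congrArg Fin.val hcon)
          obtain ⟨z, hz⟩ := Fin.exists_succAbove_eq hki
          simp only [hβ, hiN, ← hz, Fin.insertNth_apply_succAbove]
      rw [← hham] at hadj
      have : Γ.Adj (pad o (n + 1) m (β b)) (pad o (n + 1) m (β b')) ∨
          Γ.Adj (pad o (n + 1) m (β b')) (pad o (n + 1) m (β b)) := hadj
      rw [hβ] at this
      rw [hpad b, hpad b'] at this
      exact this
    -- now the main argument
    rintro y1 ⟨⟨b1, rfl⟩, hadj1⟩ y2 ⟨⟨b2, rfl⟩, hadj2⟩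
    by_contra hne
    have hbb : b1 ≠ b2 := by
      intro h; apply hne; rw [h]
    -- q ≥ 2
    have hq2 : 2 ≤ q := by
      rw [hq]
      exact Finite.one_lt_card_iff_nontrivial.mpr ⟨b1, b2, hbb⟩
    -- iN injective
    have hinj : Function.Injective iN := by
      intro c c' h
      have := congrArg (fun f => f i) h
      simpa only [hiN, Fin.insertNth_apply_same] using this
    -- a1 = q - 2
    have hd1 : Sg.dist (iN b1) (iN b2) = 1 :=
      SimpleGraph.dist_eq_one_iff_adj.mpr (hclique b1 b2 hbb)
    have ha := ha1 (iN b1) (iN b2) hd1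
    unfold aNum at ha
    set A : Set (Fin (n + 1) → S) :=
      {z | Sg.Adj (iN b2) z ∧ Sg.dist (iN b1) z = 1} with hA
    have hcardA : A.ncard = q - 2 := by
      rw [← Nat.card_coe_set_eq]
      exact ha
    -- the big subset
    set M : Set (Fin (n + 1) → S) := insert x (iN '' ({b1, b2}ᶜ)) with hM
    have hsub : M ⊆ A := by
      rintro z (rfl | ⟨c, hc, rfl⟩)
      · exact ⟨hadj2.symm, SimpleGraph.dist_eq_one_iff_adj.mpr hadj1.symm⟩
      · simp only [Set.mem_compl_iff, Set.mem_insert_iff, Set.mem_singleton_iff,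
          not_or] at hc
        exact ⟨hclique b2 c (fun h => hc.2 h.symm),
          SimpleGraph.dist_eq_one_iff_adj.mpr (hclique b1 c (fun h => hc.1 h.symm))⟩
    have hfinV : Finite (Fin (n + 1) → S) := inferInstance
    have hxnot : x ∉ iN '' ({b1, b2}ᶜ) := by
      rintro ⟨c, -, hc⟩
      exact hx ⟨c, hc⟩
    have hcardM : M.ncard = q - 1 := by
      rw [hM, Set.ncard_insert_of_notMem hxnot (Set.toFinite _),
        Set.ncard_image_of_injective _ hinj]
      have h1 : ({b1, b2} : Set S).ncard + ({b1, b2} : Set S)ᶜ.ncard = Nat.card S :=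
        Set.ncard_add_ncard_compl _ (Set.toFinite _) (Set.toFinite _)
      rw [Set.ncard_pair hbb] at h1
      omega
    have hle : M.ncard ≤ A.ncard := Set.ncard_le_ncard hsub (Set.toFinite _)
    omega
end
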